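/- Every r-maximal set has intrinsic density 1; that is, if C ⊆ ℕ is a computably enumerable set whose complement is r-cohesive, then for every computable permutation π : ℕ → ℕ, the image π(C) has asymptotic density 1. -/

import Mathlib

open Filter

open scoped Classical

/-- The `n`-th partial density of `S ⊆ ℕ`: `|S ∩ [0,n)| / n`. -/
noncomputable def partialDensity (S : Set ℕ) (n : ℕ) : ℝ :=
  (((Finset.range n).filter (fun m => m ∈ S)).card : ℝ) / n

/-- `S` has asymptotic density `d`. -/
def HasDensity (S : Set ℕ) (d : ℝ) : Prop :=
  Tendsto (partialDensity S) atTop (nhds d)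

/-- The upper asymptotic density of `S`. -/
noncomputable def upperDensity (S : Set ℕ) : ℝ :=
  limsup (partialDensity S) atTop

/-- The lower asymptotic density of `S`. -/
noncomputable def lowerDensity (S : Set ℕ) : ℝ :=
  liminf (partialDensity S) atTop

/-- A computable permutation of `ℕ`. -/
def ComputablePerm (π : ℕ → ℕ) : Prop :=
  Function.Bijective π ∧ Computable π

/-- `A` is computably enumerable: the domain of a partial computable function. -/
def CE (A : Set ℕ) : Prop :=
  ∃ f : ℕ →. ℕ, Partrec f ∧ ∀ n, n ∈ A ↔ (f n).Dom

/-- The principal function of `S`: `p_S n` is the least `x` with `|S ∩ [0,x)| ≥ n`. -/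
noncomputable def principalFn (S : Set ℕ) (n : ℕ) : ℕ :=
  sInf {x | n ≤ ((Finset.range x).filter (fun m => m ∈ S)).card}

/-- An infinite set `C` is r-cohesive if no computable set splits it into two
infinite pieces. -/
def RCohesive (C : Set ℕ) : Prop :=
  C.Infinite ∧ ¬∃ R : Set ℕ, ComputablePred (fun n => n ∈ R) ∧
    (R ∩ C).Infinite ∧ (Rᶜ ∩ C).Infinite

/-- Residue classes are computable predicates. -/
lemma computablePred_mod (k i : ℕ) : ComputablePred (fun n => n % k = i) := by
  have : PrimrecPred (fun n : ℕ => n % k = i) :=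
    PrimrecRel.comp Primrec.eq (Primrec.nat_mod.comp .id (.const k)) (.const i)
  exact ⟨inferInstance, this.decide.to_comp⟩

/-- Counting elements of a residue class below `n`. -/
lemma count_mod_le (k i n : ℕ) :
    ((Finset.range n).filter (fun m => m % k = i)).card ≤ n / k + 1 := by
  have : ((Finset.range n).filter (fun m => m % k = i)).card ≤ (Finset.range (n / k + 1)).card := by
    apply Finset.card_le_card_of_injOn (fun m => m / k)
    · intro m hm
      simp only [Finset.coe_filter, Set.mem_setOf_eq, Finset.mem_filter, Finset.mem_range, Finset.mem_coe] at hm ⊢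
      exact lt_of_le_of_lt (Nat.div_le_div_right hm.1.le) (Nat.lt_succ_self _)
    · intro a ha b hb hab
      simp only [Finset.coe_filter, Set.mem_setOf_eq, Finset.mem_range] at ha hb
      have ha2 : a % k = i := ha.2
      have hb2 : b % k = i := hb.2
      have hab2 : a / k = b / k := hab
      rw [← Nat.div_add_mod a k, ← Nat.div_add_mod b k, hab2, ha2, hb2]
  simpa using this

/-- An r-cohesive set is almost contained in a single residue class mod `k`. -/
lemma rcohesive_almost_mod (D : Set ℕ) (h : RCohesive D) (k : ℕ) (hk : 0 < k) :
    ∃ i, ({n | n % k = i}ᶜ ∩ D).Finite := by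
  by_contra hcon
  push_neg at hcon
  have hfin : ∀ i, ({n | n % k = i} ∩ D).Finite := by
    intro i
    by_contra hinf
    exact h.2 ⟨{n | n % k = i}, computablePred_mod k i, hinf, hcon i⟩
  have : D.Finite := by
    have hsub : D ⊆ ⋃ i ∈ Finset.range k, ({n | n % k = i} ∩ D) := by
      intro n hn
      refine Set.mem_biUnion (Finset.mem_range.2 (Nat.mod_lt n hk)) ⟨rfl, hn⟩
    exact ((Finset.range k).finite_toSet.biUnion (fun i _ => hfin i)).subset hsub
  exact h.1 this

/-- Any r-cohesive set has asymptotic density zero. -/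
lemma rcohesive_density_zero (D : Set ℕ) (h : RCohesive D) :
    Tendsto (partialDensity D) atTop (nhds 0) := by
  rw [Metric.tendsto_atTop]
  intro ε hε
  obtain ⟨k, hk⟩ := exists_nat_one_div_lt (half_pos hε)
  set K := k + 1 with hK
  obtain ⟨i, hfin⟩ := rcohesive_almost_mod D h K (Nat.succ_pos k)
  obtain ⟨c, hc⟩ : ∃ c, hfin.toFinset.card = c := ⟨_, rfl⟩
  obtain ⟨N, hN⟩ : ∃ N : ℕ, ((c : ℝ) + 1) / (ε / 2) < N := exists_nat_gt _
  refine ⟨max N 1, fun n hn => ?_⟩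
  have hn1 : 1 ≤ n := le_trans (le_max_right N 1) hn
  have hnN : N ≤ n := le_trans (le_max_left N 1) hn
  have hn0 : (0 : ℝ) < n := by exact_mod_cast hn1
  have hK0 : (0 : ℝ) < K := by positivity
  -- cardinality bound
  have hcard : ((Finset.range n).filter (fun m => m ∈ D)).card ≤ c + (n / K + 1) := by
    have hsub : (Finset.range n).filter (fun m => m ∈ D) ⊆
        hfin.toFinset ∪ (Finset.range n).filter (fun m => m % K = i) := by
      intro m hm
      simp only [Finset.mem_filter, Finset.mem_range] at hm
      by_cases hmi : m % K = i
      · exact Finset.mem_union_right _ (Finset.mem_filter.2 ⟨Finset.mem_range.2 hm.1, hmi⟩)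
      · exact Finset.mem_union_left _ (Set.Finite.mem_toFinset hfin |>.2 ⟨hmi, hm.2⟩)
    calc ((Finset.range n).filter (fun m => m ∈ D)).card
        ≤ (hfin.toFinset ∪ (Finset.range n).filter (fun m => m % K = i)).card :=
          Finset.card_le_card hsub
      _ ≤ c + ((Finset.range n).filter (fun m => m % K = i)).card := by
          rw [← hc]; exact Finset.card_union_le _ _
      _ ≤ c + (n / K + 1) := by
          exact Nat.add_le_add_left (count_mod_le K i n) c
  -- real bound
  have hreal : partialDensity D n ≤ ((c : ℝ) + 1) / n + 1 / K := by
    have h1 : (((Finset.range n).filter (fun m => m ∈ D)).card : ℝ)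
        ≤ ((c : ℝ) + 1) + (n : ℝ) / K := by
      calc (((Finset.range n).filter (fun m => m ∈ D)).card : ℝ)
          ≤ ((c + (n / K + 1) : ℕ) : ℝ) := by exact_mod_cast hcard
        _ = (c : ℝ) + ((n / K : ℕ) : ℝ) + 1 := by push_cast; ring
        _ ≤ (c : ℝ) + (n : ℝ) / K + 1 := by
            have := Nat.cast_div_le (α := ℝ) (m := n) (n := K)
            linarith
        _ = ((c : ℝ) + 1) + (n : ℝ) / K := by ring
    have h2 : partialDensity D n ≤ (((c : ℝ) + 1) + (n : ℝ) / K) / n := by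
      unfold partialDensity
      exact (div_le_div_iff_of_pos_right hn0).2 h1
    have h3 : (((c : ℝ) + 1) + (n : ℝ) / K) / n = ((c : ℝ) + 1) / n + 1 / K := by
      rw [add_div]
      congr 1
      rw [div_div, mul_comm, ← div_div, div_self (ne_of_gt hn0)]
    rw [h3] at h2
    exact h2
  -- conclude
  have hpos : 0 ≤ partialDensity D n := by
    unfold partialDensity; positivity
  rw [Real.dist_eq, sub_zero, abs_of_nonneg hpos]
  have hb1 : ((c : ℝ) + 1) / n < ε / 2 := by
    have hNpos : (0 : ℝ) < N := lt_trans (div_pos (by positivity) (half_pos hε)) hN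
    have h4 : ((c : ℝ) + 1) < N * (ε / 2) := by
      rw [div_lt_iff₀ (half_pos hε)] at hN; linarith
    have h5 : ((c : ℝ) + 1) / n ≤ ((c : ℝ) + 1) / N := by
      apply div_le_div_of_nonneg_left (by positivity) hNpos
      exact_mod_cast hnN
    have h6 : ((c : ℝ) + 1) / N < ε / 2 := by
      rw [div_lt_iff₀ hNpos]; linarith
    linarith
  have hb2 : (1 : ℝ) / K < ε / 2 := by
    rw [hK]; push_cast; exact_mod_cast hk
  linarith

theorem rMaximal_intrinsicDensity_one (C : Set ℕ) (hce : CE C)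
    (hrc : RCohesive Cᶜ) :
    ∀ π : ℕ → ℕ, ComputablePerm π → HasDensity (π '' C) 1 := by
  intro π hπ
  obtain ⟨hbij, hcomp⟩ := hπ
  set D := (π '' C)ᶜ with hD
  have hDeq : D = π '' Cᶜ := by rw [hD, Set.image_compl_eq hbij]
  have hDrc : RCohesive D := by
    constructor
    · rw [hDeq]; exact hrc.1.image (Set.injOn_of_injective hbij.injective)
    · rintro ⟨R, hR, h1, h2⟩
      apply hrc.2
      refine ⟨π ⁻¹' R, ?_, ?_, ?_⟩
      · obtain ⟨f, hf, hfe⟩ := ComputablePred.computable_iff.1 hR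
        refine ComputablePred.computable_iff.2 ⟨fun n => f (π n), hf.comp hcomp, ?_⟩
        funext n
        exact congrFun hfe (π n)
      · rw [hDeq] at h1
        apply Set.Infinite.of_image π
        rwa [Set.image_preimage_inter]
      · rw [hDeq] at h2
        apply Set.Infinite.of_image π
        rw [← Set.preimage_compl, Set.image_preimage_inter]
        exact h2
  have hzero := rcohesive_density_zero D hDrc
  have key : ∀ n, 1 ≤ n → partialDensity (π '' C) n = 1 - partialDensity D n := by
    intro n hn
    have hsum : ((Finset.range n).filter (fun m => m ∈ π '' C)).card
        + ((Finset.range n).filter (fun m => m ∈ D)).card = n := by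
      have h0 : ((Finset.range n).filter (fun m => m ∈ π '' C)).card
          + ((Finset.range n).filter (fun m => ¬ m ∈ π '' C)).card = n := by
        rw [Finset.card_filter_add_card_filter_not]
        exact Finset.card_range n
      have hfe2 : (Finset.range n).filter (fun m => ¬ m ∈ π '' C)
          = (Finset.range n).filter (fun m => m ∈ D) := by
        apply Finset.filter_congr
        intro m _
        simp [hD]
      rwa [hfe2] at h0
    have hn0 : (0 : ℝ) < n := by exact_mod_cast hn
    have hcast : (((Finset.range n).filter (fun m => m ∈ π '' C)).card : ℝ)
        + (((Finset.range n).filter (fun m => m ∈ D)).card : ℝ) = n := by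
      exact_mod_cast hsum
    unfold partialDensity
    rw [eq_sub_iff_add_eq, ← add_div, div_eq_one_iff_eq (ne_of_gt hn0)]
    convert hcast using 4
    refine Finset.ext fun m => ?_
    simp only [Finset.mem_filter]
  have hlim : Tendsto (fun n => 1 - partialDensity D n) atTop (nhds 1) := by
    have h := (tendsto_const_nhds :
      Tendsto (fun _ : ℕ => (1 : ℝ)) atTop (nhds 1)).sub hzero
    rw [sub_zero] at h
    exact h
  unfold HasDensity
  apply hlim.congr'
  filter_upwards [eventually_ge_atTop 1] with n hn
  exact (key n hn).symm
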